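/- Let p and q be probability measures on a measurable space Ω with q absolutely continuous with respect to p, and let S ⊆ Ω be a measurable set with q(S) ≥ 1/2. Then the conditional measure q|S satisfies KL(q|S ‖ p) ≤ 2 (KL(q ‖ p) + 1). -/

import Mathlib

open MeasureTheory ProbabilityTheory
open scoped Classical

/-- The Kullback–Leibler divergence `KL(q ‖ p)`, taking value `⊤` when `q` is not
absolutely continuous with respect to `p` or when the log-likelihood ratio is not
integrable. -/

noncomputable def klDiv {Ω : Type*} [MeasurableSpace Ω] (q p : Measure Ω) : EReal :=
  if q ≪ p ∧ Integrable (llr q p) q then ((∫ ω, llr q p ω ∂q : ℝ) : EReal) else ⊤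

theorem kl_cond_le {Ω : Type*} [MeasurableSpace Ω] (p q : Measure Ω)
    [IsProbabilityMeasure p] [IsProbabilityMeasure q]
    (hac : q ≪ p) (S : Set Ω) (hS : MeasurableSet S) (hhalf : 1 / 2 ≤ q S) :
    klDiv (q[|S]) p ≤ 2 * (klDiv q p + 1) := by
  by_cases hint : Integrable (llr q p) q
  swap
  · have h1 : klDiv q p = ⊤ := by rw [klDiv, if_neg]; tauto
    have h2 : (2 : EReal) * ((⊤ : EReal) + 1) = ⊤ := by
      rw [EReal.top_add_of_ne_bot (EReal.coe_one ▸ EReal.coe_ne_bot 1)]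
      exact EReal.mul_top_of_pos (by norm_num)
    rw [h1, h2]
    exact le_top
  -- basic facts about q S
  have hS0 : q S ≠ 0 := by
    intro h
    rw [h] at hhalf
    simp at hhalf
  have hStop : q S ≠ ⊤ := measure_ne_top q S
  haveI : IsProbabilityMeasure (q[|S]) := cond_isProbabilityMeasure hS0
  set c : ℝ := (q S).toReal with hc
  have hc_half : 1 / 2 ≤ c := by
    have h := ENNReal.toReal_mono hStop hhalf
    simpa using h
  have hc_pos : 0 < c := lt_of_lt_of_le (by norm_num) hc_half
  have hc1 : c ≤ 1 := by
    rw [hc, ← ENNReal.toReal_one]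
    exact ENNReal.toReal_mono ENNReal.one_ne_top prob_le_one
  have hcinv2 : c⁻¹ ≤ 2 := by
    rw [inv_le_comm₀ hc_pos (by norm_num)]
    linarith
  -- absolute continuity
  have hacr : q.restrict S ≪ p :=
    (Measure.absolutelyContinuous_of_le Measure.restrict_le_self).trans hac
  have hac' : q[|S] ≪ p := by
    rw [ProbabilityTheory.cond]
    exact hacr.smul_left _
  -- llr of the conditional measure
  have hinv0 : (q S)⁻¹ ≠ 0 := ENNReal.inv_ne_zero.mpr hStop
  have hinvtop : (q S)⁻¹ ≠ ⊤ := ENNReal.inv_ne_top.mpr hS0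
  have h_restrict : llr (q.restrict S) p =ᵐ[q.restrict S] llr q p := by
    filter_upwards [hacr.ae_le (Measure.rnDeriv_restrict q p hS), ae_restrict_mem hS]
      with x hx hxS
    rw [llr, llr, hx, Set.indicator_of_mem hxS]
  have h_llr_cond : llr (q[|S]) p =ᵐ[q[|S]] fun x => llr q p x - Real.log c := by
    have h1 : llr (q[|S]) p =ᵐ[q.restrict S]
        fun x => llr (q.restrict S) p x + Real.log ((q S)⁻¹).toReal := by
      rw [ProbabilityTheory.cond]
      exact llr_smul_left hacr _ hinv0 hinvtop
    have h2 : llr (q[|S]) p =ᵐ[q.restrict S] fun x => llr q p x - Real.log c := by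
      filter_upwards [h1, h_restrict] with x hx1 hx2
      rw [hx1, hx2, ENNReal.toReal_inv, Real.log_inv, ← hc]
      ring
    rw [ProbabilityTheory.cond]
    exact Measure.ae_smul_measure h2 _
  -- integrability of llr of the conditional measure
  have h_int_S : IntegrableOn (llr q p) S q := hint.integrableOn
  have h_int_cond2 : Integrable (llr q p) (q[|S]) := by
    rw [ProbabilityTheory.cond]
    exact h_int_S.smul_measure hinvtop
  have h_int_cond : Integrable (llr (q[|S]) p) (q[|S]) :=
    (integrable_congr h_llr_cond).mpr (h_int_cond2.sub (integrable_const _))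
  -- value of klDiv of the conditional measure
  set I : ℝ := ∫ x in S, llr q p x ∂q with hI
  set K : ℝ := ∫ x, llr q p x ∂q with hK
  have h_cond_int : ∫ x, llr (q[|S]) p x ∂(q[|S]) = c⁻¹ * I - Real.log c := by
    rw [integral_congr_ae h_llr_cond, integral_sub h_int_cond2 (integrable_const _),
      integral_const, probReal_univ, one_smul]
    congr 1
    rw [ProbabilityTheory.cond, integral_smul_measure, ENNReal.toReal_inv, ← hc, smul_eq_mul]
  have hKL_cond : klDiv (q[|S]) p = ((c⁻¹ * I - Real.log c : ℝ) : EReal) := by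
    rw [klDiv, if_pos ⟨hac', h_int_cond⟩, h_cond_int]
  have hKLq : klDiv q p = ((K : ℝ) : EReal) := by
    rw [klDiv, if_pos ⟨hac, hint⟩]
  -- exp(-llr) facts
  have h_exp : (fun x => Real.exp (-llr q p x)) =ᵐ[q] fun x => (p.rnDeriv q x).toReal :=
    exp_neg_llr hac
  have h_int_exp : Integrable (fun x => Real.exp (-llr q p x)) q :=
    (integrable_congr h_exp).mpr Measure.integrable_toReal_rnDeriv
  -- K ≥ 0
  have hK0 : 0 ≤ K := by
    have h1 : ∫ x, (1 - Real.exp (-llr q p x)) ∂q ≤ K := by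
      refine integral_mono ((integrable_const 1).sub h_int_exp) hint fun x => ?_
      have := Real.add_one_le_exp (-(llr q p x))
      simp only [Pi.sub_apply]
      linarith
    have h2 : ∫ x, Real.exp (-llr q p x) ∂q = ∫ x, (p.rnDeriv q x).toReal ∂q :=
      integral_congr_ae h_exp
    have h3 : ∫ x, (p.rnDeriv q x).toReal ∂q ≤ 1 := by
      have h4 := Measure.setIntegral_toReal_rnDeriv_le (μ := p) (ν := q)
        (s := Set.univ) (measure_ne_top p _)
      rwa [Measure.restrict_univ, probReal_univ] at h4
    rw [integral_sub (integrable_const 1) h_int_exp, integral_const, probReal_univ,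
      one_smul, h2] at h1
    linarith
  -- lower bound on the integral over the complement
  have hlow : -(Real.exp 1)⁻¹ ≤ ∫ x in Sᶜ, llr q p x ∂q := by
    have h1 : ∫ x in Sᶜ, -(Real.exp (-llr q p x) * (Real.exp 1)⁻¹) ∂q
        ≤ ∫ x in Sᶜ, llr q p x ∂q := by
      refine integral_mono ((h_int_exp.integrableOn.mul_const _).neg) hint.integrableOn
        fun x => ?_
      have h := Real.add_one_le_exp (-(llr q p x) - 1)
      rw [Real.exp_sub, div_eq_mul_inv] at h
      simp only
      linarith
    have h2 : ∫ x in Sᶜ, -(Real.exp (-llr q p x) * (Real.exp 1)⁻¹) ∂q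
        = -((∫ x in Sᶜ, Real.exp (-llr q p x) ∂q) * (Real.exp 1)⁻¹) := by
      rw [integral_neg, integral_mul_const]
    have h3 : ∫ x in Sᶜ, Real.exp (-llr q p x) ∂q
        = ∫ x in Sᶜ, (p.rnDeriv q x).toReal ∂q :=
      integral_congr_ae (ae_restrict_of_ae h_exp)
    have h4 : ∫ x in Sᶜ, (p.rnDeriv q x).toReal ∂q ≤ 1 := by
      refine le_trans (Measure.setIntegral_toReal_rnDeriv_le (measure_ne_top p _)) ?_
      exact measureReal_le_one
    have h5 : 0 ≤ (Real.exp 1)⁻¹ := by positivity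
    calc -(Real.exp 1)⁻¹ ≤ -((∫ x in Sᶜ, Real.exp (-llr q p x) ∂q) * (Real.exp 1)⁻¹) := by
          rw [h3]; nlinarith
      _ ≤ ∫ x in Sᶜ, llr q p x ∂q := by rw [← h2]; exact h1
  -- I ≤ K + e⁻¹
  have hIK : I ≤ K + (Real.exp 1)⁻¹ := by
    have := integral_add_compl hS hint
    rw [← hI, ← hK] at this
    linarith [hlow, this]
  -- final numeric inequality
  have hfinal : c⁻¹ * I - Real.log c ≤ 2 * (K + 1) := by
    have hlog : -Real.log c ≤ Real.log 2 := by
      rw [← Real.log_inv]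
      exact Real.log_le_log (by positivity) hcinv2
    have hlog2 : Real.log 2 < 0.6931471808 := Real.log_two_lt_d9
    have hexp1 : (2.7182818283 : ℝ) < Real.exp 1 := Real.exp_one_gt_d9
    have heinv : (Real.exp 1)⁻¹ < 0.37 := by
      rw [inv_lt_comm₀ (by positivity) (by norm_num)]
      linarith
    have hmain : c⁻¹ * I ≤ 2 * (K + (Real.exp 1)⁻¹) := by
      rcases le_or_gt 0 I with hI0 | hI0
      · have : c⁻¹ * I ≤ 2 * I := by
          apply mul_le_mul_of_nonneg_right hcinv2 hI0
        nlinarith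
      · have h1 : c⁻¹ * I < 0 := mul_neg_of_pos_of_neg (by positivity) hI0
        have h2 : (0:ℝ) < (Real.exp 1)⁻¹ := by positivity
        linarith
    nlinarith
  -- conclude
  rw [hKL_cond, hKLq]
  have : (2 : EReal) * (((K : ℝ) : EReal) + 1) = ((2 * (K + 1) : ℝ) : EReal) := by
    norm_cast
  rw [this]
  exact_mod_cast hfinal
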